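/- Let {Π_i}_{i=1}^{d²} be a SIC in dimension d ≥ 2, and let ρ be a Hermitian d×d complex matrix with Tr(ρ) = 1. Setting p(i) = Tr(ρΠ_i)/d, one has ρ = Σ_{i=1}^{d²} [(d+1)·p(i) − 1/d]·Π_i. -/

import Mathlib

/-- For a SIC {Π_i} in dimension d ≥ 2 and a trace-one Hermitian matrix ρ with
SIC probabilities p(i) = Tr(ρΠ_i)/d, one has ρ = Σ_i [(d+1)p(i) − 1/d]·Π_i. -/
theorem sic_representation (d : ℕ) (hd : 2 ≤ d)
    (P : Fin (d ^ 2) → Matrix (Fin d) (Fin d) ℂ)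
    (hherm : ∀ i, (P i).IsHermitian)
    (hproj : ∀ i, P i * P i = P i)
    (hrank : ∀ i, (P i).rank = 1)
    (hsic : ∀ i j, (P i * P j).trace =
      ((d : ℂ) * (if i = j then 1 else 0) + 1) / ((d : ℂ) + 1))
    (ρ : Matrix (Fin d) (Fin d) ℂ) (hρ : ρ.IsHermitian) (htr : ρ.trace = 1)
    (p : Fin (d ^ 2) → ℝ) (hp : ∀ i, (p i : ℂ) = (ρ * P i).trace / d) :
    ρ = ∑ i, (((((d : ℝ) + 1) * p i - 1 / d) : ℝ) : ℂ) • P i := by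
  have hd0 : (d : ℂ) ≠ 0 := Nat.cast_ne_zero.mpr (by omega)
  have hd1 : (d : ℂ) + 1 ≠ 0 := by
    intro h
    have h2 : (d : ℂ) = -1 := by linear_combination h
    have h3 : (d : ℝ) = -1 := by exact_mod_cast congrArg Complex.re h2
    have : (0:ℝ) ≤ (d:ℝ) := Nat.cast_nonneg d
    linarith
  -- trace of each P i is 1
  have htrP : ∀ i, (P i).trace = 1 := by
    intro i
    have h := hsic i i
    rw [hproj i, if_pos rfl] at h
    rw [h]
    field_simp
  -- trace of (∑ b i • P i) * P j
  have htrace_sum : ∀ (b : Fin (d ^ 2) → ℂ) (j : Fin (d ^ 2)),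
      (((∑ i, b i • P i) * P j)).trace
        = ((d : ℂ) * b j + ∑ i, b i) / ((d : ℂ) + 1) := by
    intro b j
    rw [Matrix.sum_mul, Matrix.trace_sum]
    have hterm : ∀ i, ((b i • P i) * P j).trace
        = (d : ℂ) * (if i = j then b i else 0) / ((d : ℂ) + 1) + b i / ((d : ℂ) + 1) := by
      intro i
      rw [Matrix.smul_mul, Matrix.trace_smul, hsic i j]
      by_cases h : i = j <;> simp [h, smul_eq_mul] <;> ring
    simp_rw [hterm]
    rw [Finset.sum_add_distrib, ← Finset.sum_div, ← Finset.sum_div, ← Finset.mul_sum,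
      Finset.sum_ite_eq' Finset.univ j b]
    simp [← add_div]
  -- coefficients vanish if all those traces vanish
  have hcoeff : ∀ (b : Fin (d ^ 2) → ℂ),
      (∀ j, ((∑ i, b i • P i) * P j).trace = 0) → ∀ j, b j = 0 := by
    intro b hb
    have h1 : ∀ j, (d : ℂ) * b j + ∑ i, b i = 0 := by
      intro j
      have h := hb j
      rw [htrace_sum] at h
      exact (div_eq_zero_iff.mp h).resolve_right hd1
    set s := ∑ i, b i with hs
    have hbj : ∀ j, b j = -s / d := by
      intro j
      field_simp
      linear_combination h1 j
    have hsum : s = (d ^ 2 : ℂ) * (-s / d) := by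
      rw [hs]
      conv_lhs => rw [Finset.sum_congr rfl (fun j _ => hbj j)]
      simp [Finset.sum_const, Finset.card_univ, nsmul_eq_mul]
      exact Or.inl (by rw [hs])
    have hs0 : s = 0 := by
      have he : (d:ℂ)^2 * (-s/d) = -((d:ℂ)*s) := by
        field_simp
      have : (1 + (d:ℂ)) * s = 0 := by linear_combination hsum + he
      rcases mul_eq_zero.mp this with h | h
      · exact absurd (by linear_combination h) hd1
      · exact h
    intro j
    rw [hbj j, hs0]
    simp
  -- the P i span everything
  haveI : Nonempty (Fin (d ^ 2)) := ⟨⟨0, by positivity⟩⟩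
  have hli : LinearIndependent ℂ P := by
    rw [Fintype.linearIndependent_iff]
    intro b hb
    exact hcoeff b (fun j => by rw [hb, Matrix.zero_mul, Matrix.trace_zero])
  have hspan : Submodule.span ℂ (Set.range P) = ⊤ := by
    apply hli.span_eq_top_of_card_eq_finrank
    simp [Module.finrank_matrix]
    ring
  have key : ∀ D : Matrix (Fin d) (Fin d) ℂ,
      (∀ j, (D * P j).trace = 0) → D = 0 := by
    intro D hD
    have hmem : D ∈ Submodule.span ℂ (Set.range P) := hspan ▸ Submodule.mem_top
    obtain ⟨b, hb⟩ := (Submodule.mem_span_range_iff_exists_fun ℂ).mp hmem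
    have hb0 := hcoeff b (fun j => by rw [hb]; exact hD j)
    rw [← hb]
    exact Finset.sum_eq_zero (fun i _ => by rw [hb0 i, zero_smul])
  -- the P i sum to d • 1
  have hsumP : (∑ i, P i) = (d : ℂ) • 1 := by
    have hz := key ((∑ i, P i) - (d : ℂ) • 1) ?_
    · exact sub_eq_zero.mp hz
    intro j
    rw [Matrix.sub_mul, Matrix.trace_sub, Matrix.smul_mul, Matrix.trace_smul,
      Matrix.one_mul, htrP]
    have h := htrace_sum (fun _ => 1) j
    simp only [one_smul] at h
    rw [h]
    simp [Finset.sum_const, Finset.card_univ]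
    field_simp
    ring
  -- the probabilities sum to 1
  have hsp : (∑ i, (p i : ℂ)) = 1 := by
    have hts : ∑ i, ((ρ * P i).trace) = (ρ * ∑ i, P i).trace := by
      rw [Matrix.mul_sum, Matrix.trace_sum]
    calc ∑ i, (p i : ℂ) = ∑ i, (ρ * P i).trace / d := by simp_rw [hp]
    _ = (∑ i, (ρ * P i).trace) / d := by rw [Finset.sum_div]
    _ = (ρ * ((d : ℂ) • 1)).trace / d := by rw [hts, hsumP]
    _ = 1 := by
        rw [Matrix.mul_smul, Matrix.mul_one, Matrix.trace_smul, htr]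
        field_simp
        simp
  -- coefficient facts
  have hcj : ∀ i, (((((d : ℝ) + 1) * p i - 1 / d) : ℝ) : ℂ)
      = ((d : ℂ) + 1) * (p i : ℂ) - 1 / d := by
    intro i
    push_cast
    ring
  have hsc : ∑ i, (((((d : ℝ) + 1) * p i - 1 / d) : ℝ) : ℂ) = 1 := by
    simp_rw [hcj]
    rw [Finset.sum_sub_distrib, ← Finset.mul_sum, hsp]
    simp [Finset.sum_const, Finset.card_univ]
    field_simp
    ring
  -- finish
  refine sub_eq_zero.mp (key _ ?_)
  intro j
  rw [Matrix.sub_mul, Matrix.trace_sub, htrace_sum, hsc, hcj j]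
  have htrρ : (ρ * P j).trace = (d : ℂ) * p j := by
    rw [hp j]
    field_simp
  rw [htrρ]
  field_simp
  ring
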